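/- Let (Z, dist) be a metric space with its Borel σ-algebra, μ a Borel probability measure on Z, γ ∈ [0,1), and K₁, K₂ : Z → ProbabilityMeasure Z measurable Markov kernels. Define the discounted visitation measures dᵢ = (1−γ) Σ_{t≥0} γ^t (μ bound t times through Kᵢ), i = 1, 2. Assume: (i) there is β ≥ 0 with γβ < 1 such that for every bounded 1-Lipschitz f : Z → ℝ, the map z ↦ ∫ f dK₁(z) is β-Lipschitz; and (ii) there is ε ≥ 0 such that for every z ∈ Z and every bounded 1-Lipschitz f : Z → ℝ, |∫ f dK₁(z) − ∫ f dK₂(z)| ≤ ε. Then for every bounded 1-Lipschitz f : Z → ℝ, |∫ f dd₁ − ∫ f dd₂| ≤ γε / (1 − γβ). -/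

import Mathlib

open MeasureTheory

/-- The `t`-step law `μ K^t` of a Markov kernel `K` started from `μ`. -/
noncomputable def iterLaw {Z : Type*} [MeasurableSpace Z]
    (K : Z → Measure Z) (μ : Measure Z) : ℕ → Measure Z
  | 0 => μ
  | t + 1 => (iterLaw K μ t).bind K

/-- The discounted visitation measure `(1 − γ) Σ_t γ^t μ K^t`. -/
noncomputable def discountedVisitation {Z : Type*} [MeasurableSpace Z]
    (K : Z → Measure Z) (μ : Measure Z) (γ : ℝ) : Measure Z :=
  ENNReal.ofReal (1 - γ) •
    Measure.sum fun t : ℕ => ENNReal.ofReal (γ ^ t) • iterLaw K μ t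

section helpers
variable {Z : Type*} [MeasurableSpace Z]

lemma sdb_integrable_of_bounded (ν : Measure Z) [IsFiniteMeasure ν] {f : Z → ℝ}
    (hf : Measurable f) {M : ℝ} (hM : ∀ z, |f z| ≤ M) : Integrable f ν :=
  Integrable.mono' (integrable_const M) hf.aestronglyMeasurable
    (Filter.Eventually.of_forall fun z => by simpa using hM z)

lemma sdb_integral_eq (ν : Measure Z) [IsProbabilityMeasure ν] {f : Z → ℝ}
    (hf : Measurable f) {M : ℝ} (hM : ∀ z, |f z| ≤ M) :
    ∫ z, f z ∂ν = (∫⁻ z, ENNReal.ofReal (f z + M) ∂ν).toReal - M := by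
  have hfi : Integrable f ν := sdb_integrable_of_bounded ν hf hM
  have h1 : ∫ z, (f z + M) ∂ν = (∫⁻ z, ENNReal.ofReal (f z + M) ∂ν).toReal := by
    refine integral_eq_lintegral_of_nonneg_ae (Filter.Eventually.of_forall fun z => ?_)
      (hf.add measurable_const).aestronglyMeasurable
    show (0:ℝ) ≤ f z + M
    linarith [(abs_le.1 (hM z)).1]
  have h2 : ∫ z, (f z + M) ∂ν = (∫ z, f z ∂ν) + M := by
    rw [integral_add hfi (integrable_const M), integral_const]
    simp
  linarith [h1.symm.trans h2]

lemma sdb_lintegral_lt_top (ν : Measure Z) [IsProbabilityMeasure ν] {f : Z → ℝ}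
    {M : ℝ} (hM : ∀ z, |f z| ≤ M) :
    ∫⁻ z, ENNReal.ofReal (f z + M) ∂ν < ⊤ := by
  calc ∫⁻ z, ENNReal.ofReal (f z + M) ∂ν ≤ ∫⁻ _, ENNReal.ofReal (M + M) ∂ν := by
        refine lintegral_mono fun z => ENNReal.ofReal_le_ofReal ?_
        linarith [(abs_le.1 (hM z)).2]
    _ = ENNReal.ofReal (M + M) := by simp
    _ < ⊤ := ENNReal.ofReal_lt_top

lemma sdb_measurable_integral {K : Z → Measure Z} (hK : Measurable K)
    (hKp : ∀ z, IsProbabilityMeasure (K z)) {f : Z → ℝ}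
    (hf : Measurable f) {M : ℝ} (hM : ∀ z, |f z| ≤ M) :
    Measurable fun z => ∫ w, f w ∂(K z) := by
  have : (fun z => ∫ w, f w ∂(K z))
      = fun z => (∫⁻ w, ENNReal.ofReal (f w + M) ∂(K z)).toReal - M := by
    funext z
    haveI := hKp z
    exact sdb_integral_eq (K z) hf hM
  rw [this]
  exact (((Measure.measurable_lintegral
    ((ENNReal.measurable_ofReal.comp (hf.add measurable_const)))).comp hK).ennreal_toReal).sub
    measurable_const

lemma sdb_bind_prob (ν : Measure Z) [IsProbabilityMeasure ν] {K : Z → Measure Z}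
    (hK : Measurable K) (hKp : ∀ z, IsProbabilityMeasure (K z)) :
    IsProbabilityMeasure (ν.bind K) := by
  constructor
  rw [Measure.bind_apply MeasurableSet.univ hK.aemeasurable]
  simp [fun z => (hKp z).measure_univ]

lemma sdb_integral_bind (ν : Measure Z) [IsProbabilityMeasure ν] {K : Z → Measure Z}
    (hK : Measurable K) (hKp : ∀ z, IsProbabilityMeasure (K z)) {f : Z → ℝ}
    (hf : Measurable f) {M : ℝ} (hM0 : 0 ≤ M) (hM : ∀ z, |f z| ≤ M) :
    ∫ w, f w ∂(ν.bind K) = ∫ z, (∫ w, f w ∂(K z)) ∂ν := by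
  haveI := sdb_bind_prob ν hK hKp
  have hmeas : Measurable fun z => ENNReal.ofReal (f z + M) :=
    ENNReal.measurable_ofReal.comp (hf.add measurable_const)
  rw [sdb_integral_eq (ν.bind K) hf hM, Measure.lintegral_bind hK.aemeasurable hmeas.aemeasurable]
  have hL : Measurable fun z => ∫⁻ w, ENNReal.ofReal (f w + M) ∂(K z) :=
    (Measure.measurable_lintegral hmeas).comp hK
  have hfin : ∀ᵐ z ∂ν, (∫⁻ w, ENNReal.ofReal (f w + M) ∂(K z)) < ⊤ :=
    Filter.Eventually.of_forall fun z => by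
      haveI := hKp z; exact sdb_lintegral_lt_top (K z) hM
  have h1 : ∫ z, (∫⁻ w, ENNReal.ofReal (f w + M) ∂(K z)).toReal ∂ν
      = (∫⁻ z, ∫⁻ w, ENNReal.ofReal (f w + M) ∂(K z) ∂ν).toReal :=
    integral_toReal hL.aemeasurable hfin
  have h2 : ∀ z, ∫ w, f w ∂(K z)
      = (∫⁻ w, ENNReal.ofReal (f w + M) ∂(K z)).toReal - M := fun z => by
    haveI := hKp z; exact sdb_integral_eq (K z) hf hM
  have h3 : ∫ z, (∫ w, f w ∂(K z)) ∂ν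
      = ∫ z, ((∫⁻ w, ENNReal.ofReal (f w + M) ∂(K z)).toReal - M) ∂ν := by
    exact integral_congr_ae (Filter.Eventually.of_forall h2)
  rw [h3, integral_sub _ (integrable_const M), h1, integral_const]
  · simp
  · refine sdb_integrable_of_bounded ν hL.ennreal_toReal (M := M + M) fun z => ?_
    haveI := hKp z
    rw [abs_of_nonneg ENNReal.toReal_nonneg]
    have := sdb_lintegral_lt_top (K z) hM
    calc (∫⁻ w, ENNReal.ofReal (f w + M) ∂(K z)).toReal
        ≤ (ENNReal.ofReal (M + M)).toReal := by
          apply ENNReal.toReal_mono ENNReal.ofReal_ne_top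
          calc ∫⁻ w, ENNReal.ofReal (f w + M) ∂(K z)
              ≤ ∫⁻ _, ENNReal.ofReal (M + M) ∂(K z) := by
                refine lintegral_mono fun w => ENNReal.ofReal_le_ofReal ?_
                linarith [(abs_le.1 (hM w)).2]
            _ = ENNReal.ofReal (M + M) := by simp
      _ = M + M := ENNReal.toReal_ofReal (by linarith)

end helpers

lemma sdb_iterLaw_prob {Z : Type*} [MeasurableSpace Z] (μ : Measure Z) [IsProbabilityMeasure μ]
    {K : Z → Measure Z} (hK : Measurable K) (hKp : ∀ z, IsProbabilityMeasure (K z)) :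
    ∀ t, IsProbabilityMeasure (iterLaw K μ t)
  | 0 => inferInstanceAs (IsProbabilityMeasure μ)
  | t + 1 => by
      haveI := sdb_iterLaw_prob μ hK hKp t
      exact sdb_bind_prob (iterLaw K μ t) hK hKp

lemma sdb_key {Z : Type*} [MetricSpace Z] [MeasurableSpace Z] [BorelSpace Z]
    (μ : Measure Z) [IsProbabilityMeasure μ]
    (K₁ K₂ : Z → Measure Z)
    (hK₁_prob : ∀ z, IsProbabilityMeasure (K₁ z))
    (hK₂_prob : ∀ z, IsProbabilityMeasure (K₂ z))
    (hK₁_meas : Measurable K₁) (hK₂_meas : Measurable K₂)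
    (β : ℝ) (hβ : 0 ≤ β)
    (hK₁_lip : ∀ f : Z → ℝ, LipschitzWith 1 f → (∃ M, ∀ z, |f z| ≤ M) →
      ∀ z z' : Z, |(∫ w, f w ∂(K₁ z)) - ∫ w, f w ∂(K₁ z')| ≤ β * dist z z')
    (ε : ℝ) (hε : 0 ≤ ε)
    (h_close : ∀ z : Z, ∀ f : Z → ℝ, LipschitzWith 1 f → (∃ M, ∀ w, |f w| ≤ M) →
      |(∫ w, f w ∂(K₁ z)) - ∫ w, f w ∂(K₂ z)| ≤ ε) :
    ∀ t : ℕ, ∀ f : Z → ℝ, LipschitzWith 1 f → (∃ M, ∀ z, |f z| ≤ M) →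
      |(∫ z, f z ∂(iterLaw K₁ μ t)) - ∫ z, f z ∂(iterLaw K₂ μ t)|
        ≤ ε * ∑ k ∈ Finset.range t, β ^ k := by
  have hZ : Nonempty Z := by
    rcases isEmpty_or_nonempty Z with h | h
    · have h0 : μ Set.univ = 0 := by rw [Set.univ_eq_empty_iff.mpr h]; exact measure_empty
      rw [measure_univ] at h0; exact absurd h0 one_ne_zero
    · exact h
  obtain ⟨z₀⟩ := hZ
  intro t
  induction t with
  | zero => intro f _ _; simp [iterLaw]
  | succ t ih =>
    intro f hf ⟨M, hM⟩
    have hM0 : 0 ≤ M := le_trans (abs_nonneg _) (hM z₀)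
    have hfm : Measurable f := hf.continuous.measurable
    haveI hp₁ : IsProbabilityMeasure (iterLaw K₁ μ t) := sdb_iterLaw_prob μ hK₁_meas hK₁_prob t
    haveI hp₂ : IsProbabilityMeasure (iterLaw K₂ μ t) := sdb_iterLaw_prob μ hK₂_meas hK₂_prob t
    set ν₁ := iterLaw K₁ μ t
    set ν₂ := iterLaw K₂ μ t
    set g₁ : Z → ℝ := fun z => ∫ w, f w ∂(K₁ z) with hg₁
    set g₂ : Z → ℝ := fun z => ∫ w, f w ∂(K₂ z) with hg₂
    have hbound : ∀ (K : Z → Measure Z), (∀ z, IsProbabilityMeasure (K z)) →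
        ∀ z, |∫ w, f w ∂(K z)| ≤ M := by
      intro K hKp z
      haveI := hKp z
      have habs : |∫ w, f w ∂(K z)| ≤ ∫ w, |f w| ∂(K z) := by
        simpa [Real.norm_eq_abs] using norm_integral_le_integral_norm (μ := K z) f
      refine habs.trans ?_
      calc ∫ w, |f w| ∂(K z)
          ≤ ∫ _, M ∂(K z) := by
            refine integral_mono ?_ (integrable_const M) hM
            exact (sdb_integrable_of_bounded (K z) hfm hM).abs
        _ = M := by simp
    have hg₁b : ∀ z, |g₁ z| ≤ M := hbound K₁ hK₁_prob
    have hg₂b : ∀ z, |g₂ z| ≤ M := hbound K₂ hK₂_prob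
    have hg₁m : Measurable g₁ := sdb_measurable_integral hK₁_meas hK₁_prob hfm hM
    have hg₂m : Measurable g₂ := sdb_measurable_integral hK₂_meas hK₂_prob hfm hM
    have hrw₁ : ∫ z, f z ∂(iterLaw K₁ μ (t+1)) = ∫ z, g₁ z ∂ν₁ :=
      sdb_integral_bind ν₁ hK₁_meas hK₁_prob hfm hM0 hM
    have hrw₂ : ∫ z, f z ∂(iterLaw K₂ μ (t+1)) = ∫ z, g₂ z ∂ν₂ :=
      sdb_integral_bind ν₂ hK₂_meas hK₂_prob hfm hM0 hM
    have hglip := hK₁_lip f hf ⟨M, hM⟩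
    -- Term 1
    have hterm1 : |(∫ z, g₁ z ∂ν₁) - ∫ z, g₁ z ∂ν₂| ≤ β * (ε * ∑ k ∈ Finset.range t, β ^ k) := by
      rcases eq_or_lt_of_le hβ with hβ0 | hβpos
      · have hconst : ∀ z, g₁ z = g₁ z₀ := by
          intro z
          have := hglip z z₀
          rw [← hβ0, zero_mul] at this
          have := abs_nonpos_iff.mp (le_of_le_of_eq this rfl)
          linarith [sub_eq_zero.mp this]
        have : (fun z => g₁ z) = fun _ => g₁ z₀ := funext hconst
        rw [show (∫ z, g₁ z ∂ν₁) = ∫ _, g₁ z₀ ∂ν₁ from integral_congr_ae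
            (Filter.Eventually.of_forall hconst),
          show (∫ z, g₁ z ∂ν₂) = ∫ _, g₁ z₀ ∂ν₂ from integral_congr_ae
            (Filter.Eventually.of_forall hconst)]
        simp [← hβ0]
      · set f' : Z → ℝ := fun z => β⁻¹ * g₁ z with hf'
        have hf'lip : LipschitzWith 1 f' := by
          refine LipschitzWith.of_dist_le_mul fun z z' => ?_
          rw [Real.dist_eq]
          have : f' z - f' z' = β⁻¹ * (g₁ z - g₁ z') := by ring
          rw [this, abs_mul, abs_of_nonneg (inv_nonneg.mpr hβ)]
          calc β⁻¹ * |g₁ z - g₁ z'| ≤ β⁻¹ * (β * dist z z') := by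
                exact mul_le_mul_of_nonneg_left (hglip z z') (inv_nonneg.mpr hβ)
            _ = dist z z' := by field_simp
          simp
        have hf'b : ∀ z, |f' z| ≤ β⁻¹ * M := fun z => by
          rw [abs_mul, abs_of_nonneg (inv_nonneg.mpr hβ)]
          exact mul_le_mul_of_nonneg_left (hg₁b z) (inv_nonneg.mpr hβ)
        have := ih f' hf'lip ⟨β⁻¹ * M, hf'b⟩
        have hint1 : ∫ z, f' z ∂ν₁ = β⁻¹ * ∫ z, g₁ z ∂ν₁ := integral_const_mul _ _
        have hint2 : ∫ z, f' z ∂ν₂ = β⁻¹ * ∫ z, g₁ z ∂ν₂ := integral_const_mul _ _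
        rw [hint1, hint2, ← mul_sub, abs_mul, abs_of_nonneg (inv_nonneg.mpr hβ)] at this
        calc |(∫ z, g₁ z ∂ν₁) - ∫ z, g₁ z ∂ν₂|
            = β * (β⁻¹ * |(∫ z, g₁ z ∂ν₁) - ∫ z, g₁ z ∂ν₂|) := by field_simp
          _ ≤ β * (ε * ∑ k ∈ Finset.range t, β ^ k) :=
              mul_le_mul_of_nonneg_left this hβ
    -- Term 2
    have hterm2 : |(∫ z, g₁ z ∂ν₂) - ∫ z, g₂ z ∂ν₂| ≤ ε := by
      have hi₁ : Integrable g₁ ν₂ := sdb_integrable_of_bounded ν₂ hg₁m hg₁b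
      have hi₂ : Integrable g₂ ν₂ := sdb_integrable_of_bounded ν₂ hg₂m hg₂b
      rw [← integral_sub hi₁ hi₂]
      have habs : |∫ z, (g₁ z - g₂ z) ∂ν₂| ≤ ∫ z, |g₁ z - g₂ z| ∂ν₂ := by
        simpa [Real.norm_eq_abs] using
          norm_integral_le_integral_norm (μ := ν₂) (fun z => g₁ z - g₂ z)
      refine habs.trans ?_
      calc ∫ z, |g₁ z - g₂ z| ∂ν₂
          ≤ ∫ _, ε ∂ν₂ := by
            refine integral_mono (hi₁.sub hi₂).abs (integrable_const ε) fun z => ?_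
            exact h_close z f hf ⟨M, hM⟩
        _ = ε := by simp
    rw [hrw₁, hrw₂]
    have := abs_sub_le (∫ z, g₁ z ∂ν₁) (∫ z, g₁ z ∂ν₂) (∫ z, g₂ z ∂ν₂)
    rw [geom_sum_succ]
    calc |(∫ z, g₁ z ∂ν₁) - ∫ z, g₂ z ∂ν₂|
        ≤ β * (ε * ∑ k ∈ Finset.range t, β ^ k) + ε := by linarith [hterm1, hterm2]
      _ = ε * (β * ∑ k ∈ Finset.range t, β ^ k + 1) := by ring

lemma sdb_abs_integral_le {Z : Type*} [MeasurableSpace Z] (ν : Measure Z)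
    [IsProbabilityMeasure ν] {f : Z → ℝ} (hf : Measurable f) {M : ℝ}
    (hM : ∀ z, |f z| ≤ M) : |∫ z, f z ∂ν| ≤ M := by
  have habs : |∫ z, f z ∂ν| ≤ ∫ z, |f z| ∂ν := by
    simpa [Real.norm_eq_abs] using norm_integral_le_integral_norm (μ := ν) f
  refine habs.trans ?_
  calc ∫ z, |f z| ∂ν ≤ ∫ _, M ∂ν := by
        refine integral_mono (sdb_integrable_of_bounded ν hf hM).abs (integrable_const M) hM
    _ = M := by simp

/-- **Abstract core of Theorem `state_distrib_bound`.** If the expectation operator of the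
kernel `K₁` maps bounded 1-Lipschitz functions to `β`-Lipschitz functions (`γβ < 1`) and `K₁`
and `K₂` are pointwise `ε`-close in dual Wasserstein form, then the discounted visitation
measures of `K₁` and `K₂` are `γε/(1 − γβ)`-close in dual Wasserstein form. -/
theorem state_distrib_bound {Z : Type*} [MetricSpace Z] [MeasurableSpace Z] [BorelSpace Z]
    (μ : Measure Z) [IsProbabilityMeasure μ]
    (γ : ℝ) (hγ0 : 0 ≤ γ) (hγ1 : γ < 1)
    (K₁ K₂ : Z → Measure Z)
    (hK₁_prob : ∀ z, IsProbabilityMeasure (K₁ z))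
    (hK₂_prob : ∀ z, IsProbabilityMeasure (K₂ z))
    (hK₁_meas : Measurable K₁) (hK₂_meas : Measurable K₂)
    (β : ℝ) (hβ : 0 ≤ β) (hγβ : γ * β < 1)
    (hK₁_lip : ∀ f : Z → ℝ, LipschitzWith 1 f → (∃ M, ∀ z, |f z| ≤ M) →
      ∀ z z' : Z, |(∫ w, f w ∂(K₁ z)) - ∫ w, f w ∂(K₁ z')| ≤ β * dist z z')
    (ε : ℝ) (hε : 0 ≤ ε)
    (h_close : ∀ z : Z, ∀ f : Z → ℝ, LipschitzWith 1 f → (∃ M, ∀ w, |f w| ≤ M) →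
      |(∫ w, f w ∂(K₁ z)) - ∫ w, f w ∂(K₂ z)| ≤ ε) :
    ∀ f : Z → ℝ, LipschitzWith 1 f → (∃ M, ∀ z, |f z| ≤ M) →
      |(∫ z, f z ∂(discountedVisitation K₁ μ γ)) -
          ∫ z, f z ∂(discountedVisitation K₂ μ γ)| ≤
        γ * ε / (1 - γ * β) := by
  intro f hf ⟨M, hM⟩
  have hfm : Measurable f := hf.continuous.measurable
  have h1γ : (0:ℝ) < 1 - γ := by linarith
  have h1γβ : (0:ℝ) < 1 - γ * β := by linarith
  set S : ℕ → ℝ := fun t => ∑ k ∈ Finset.range t, β ^ k with hS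
  have hSnn : ∀ t, 0 ≤ S t := fun t =>
    Finset.sum_nonneg fun k _ => pow_nonneg hβ k
  set r : ℝ := max γ (γ * β) with hr
  have hr0 : 0 ≤ r := le_trans hγ0 (le_max_left _ _)
  have hr1 : r < 1 := max_lt hγ1 hγβ
  have hγS_le : ∀ t : ℕ, γ ^ t * S t ≤ (t : ℝ) * r ^ t := by
    intro t
    rw [hS, Finset.mul_sum]
    calc ∑ k ∈ Finset.range t, γ ^ t * β ^ k
        ≤ ∑ _k ∈ Finset.range t, r ^ t := by
          refine Finset.sum_le_sum fun k hk => ?_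
          have hk' : k ≤ t := (Finset.mem_range.mp hk).le
          calc γ ^ t * β ^ k = γ ^ (k + (t - k)) * β ^ k := by
                rw [Nat.add_sub_cancel' hk']
            _ = (γ * β) ^ k * γ ^ (t - k) := by rw [pow_add, mul_pow]; ring
            _ ≤ r ^ k * r ^ (t - k) := by
                refine mul_le_mul (pow_le_pow_left₀ (mul_nonneg hγ0 hβ) (le_max_right _ _) _)
                  (pow_le_pow_left₀ hγ0 (le_max_left _ _) _) (pow_nonneg hγ0 _)
                  (pow_nonneg hr0 _)
            _ = r ^ t := by rw [← pow_add, Nat.add_sub_cancel' hk']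
      _ = (t : ℝ) * r ^ t := by
          rw [Finset.sum_const, Finset.card_range, nsmul_eq_mul]
  have hTsum : Summable fun t : ℕ => γ ^ t * S t := by
    have h1 : Summable fun t : ℕ => (t : ℝ) * r ^ t := by
      have := summable_pow_mul_geometric_of_norm_lt_one 1
        (r := r) (by rwa [Real.norm_eq_abs, abs_of_nonneg hr0])
      simpa using this
    exact h1.of_nonneg_of_le
      (fun t => mul_nonneg (pow_nonneg hγ0 t) (hSnn t)) hγS_le
  have hT : ∑' t : ℕ, γ ^ t * S t = γ / ((1 - γ) * (1 - γ * β)) := by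
    set T : ℝ := ∑' t : ℕ, γ ^ t * S t with hTdef
    have hshift : T = γ ^ 0 * S 0 + ∑' t : ℕ, γ ^ (t + 1) * S (t + 1) :=
      Summable.tsum_eq_zero_add hTsum
    have heach : ∀ t : ℕ, γ ^ (t + 1) * S (t + 1)
        = γ * γ ^ t + (γ * β) * (γ ^ t * S t) := by
      intro t
      show γ ^ (t + 1) * (∑ k ∈ Finset.range (t + 1), β ^ k)
          = γ * γ ^ t + (γ * β) * (γ ^ t * ∑ k ∈ Finset.range t, β ^ k)
      rw [geom_sum_succ]
      ring
    have hsum2 : (∑' t : ℕ, γ ^ (t + 1) * S (t + 1))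
        = γ * (1 - γ)⁻¹ + (γ * β) * T := by
      calc (∑' t : ℕ, γ ^ (t + 1) * S (t + 1))
          = ∑' t : ℕ, (γ * γ ^ t + (γ * β) * (γ ^ t * S t)) := by
            exact tsum_congr heach
        _ = (∑' t : ℕ, γ * γ ^ t) + ∑' t : ℕ, (γ * β) * (γ ^ t * S t) :=
            Summable.tsum_add ((summable_geometric_of_lt_one hγ0 hγ1).mul_left γ)
              (hTsum.mul_left (γ * β))
        _ = γ * (1 - γ)⁻¹ + (γ * β) * T := by
            rw [tsum_mul_left, tsum_mul_left, tsum_geometric_of_lt_one hγ0 hγ1]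
    have h00 : γ ^ 0 * S 0 = 0 := by simp [hS]
    have hT1 : T = γ * (1 - γ)⁻¹ + (γ * β) * T := by
      conv_lhs => rw [hshift]
      rw [hsum2, h00, zero_add]
    rw [eq_div_iff (by positivity : ((1:ℝ) - γ) * (1 - γ * β) ≠ 0)]
    have h2 : T * (1 - γ * β) = γ * (1 - γ)⁻¹ := by linear_combination hT1
    field_simp at h2
    linear_combination h2
  have hrepr : ∀ (K : Z → Measure Z), Measurable K → (∀ z, IsProbabilityMeasure (K z)) →
      ∫ z, f z ∂(discountedVisitation K μ γ)
        = (1 - γ) * ∑' t : ℕ, γ ^ t * ∫ z, f z ∂(iterLaw K μ t) := by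
    intro K hK hKp
    haveI hfin : IsFiniteMeasure
        (Measure.sum fun t : ℕ => ENNReal.ofReal (γ ^ t) • iterLaw K μ t) := by
      constructor
      rw [Measure.sum_apply _ MeasurableSet.univ]
      have heq : ∀ t : ℕ, (ENNReal.ofReal (γ ^ t) • iterLaw K μ t) Set.univ
          = (ENNReal.ofReal γ) ^ t := by
        intro t
        haveI := sdb_iterLaw_prob μ hK hKp t
        rw [Measure.smul_apply, smul_eq_mul, measure_univ, mul_one,
          ENNReal.ofReal_pow hγ0]
      rw [tsum_congr heq, ENNReal.tsum_geometric]
      exact ENNReal.inv_lt_top.2 (tsub_pos_iff_lt.mpr (ENNReal.ofReal_lt_one.2 hγ1))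
    have hint : Integrable f
        (Measure.sum fun t : ℕ => ENNReal.ofReal (γ ^ t) • iterLaw K μ t) :=
      sdb_integrable_of_bounded _ hfm hM
    rw [discountedVisitation, integral_smul_measure,
      ENNReal.toReal_ofReal (by linarith), integral_sum_measure hint]
    congr 1
    refine tsum_congr fun t => ?_
    rw [integral_smul_measure, ENNReal.toReal_ofReal (pow_nonneg hγ0 t), smul_eq_mul]
  set b₁ : ℕ → ℝ := fun t => ∫ z, f z ∂(iterLaw K₁ μ t) with hb₁
  set b₂ : ℕ → ℝ := fun t => ∫ z, f z ∂(iterLaw K₂ μ t) with hb₂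
  have hbd : ∀ t, |b₁ t| ≤ M ∧ |b₂ t| ≤ M := by
    intro t
    haveI := sdb_iterLaw_prob μ hK₁_meas hK₁_prob t
    haveI := sdb_iterLaw_prob μ hK₂_meas hK₂_prob t
    exact ⟨sdb_abs_integral_le _ hfm hM, sdb_abs_integral_le _ hfm hM⟩
  have hsummOf : ∀ b : ℕ → ℝ, (∀ t, |b t| ≤ M) → Summable fun t => γ ^ t * b t := by
    intro b hb
    refine Summable.of_norm_bounded
      ((summable_geometric_of_lt_one hγ0 hγ1).mul_left M) fun t => ?_
    rw [Real.norm_eq_abs, abs_mul, abs_of_nonneg (pow_nonneg hγ0 t), mul_comm M (γ ^ t)]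
    exact mul_le_mul_of_nonneg_left (hb t) (pow_nonneg hγ0 t)
  have hs₁ : Summable fun t => γ ^ t * b₁ t := hsummOf b₁ fun t => (hbd t).1
  have hs₂ : Summable fun t => γ ^ t * b₂ t := hsummOf b₂ fun t => (hbd t).2
  have hkey := sdb_key μ K₁ K₂ hK₁_prob hK₂_prob hK₁_meas hK₂_meas β hβ hK₁_lip ε hε h_close
  have habs : ∀ t : ℕ, |γ ^ t * b₁ t - γ ^ t * b₂ t| ≤ γ ^ t * (ε * S t) := by
    intro t
    rw [← mul_sub, abs_mul, abs_of_nonneg (pow_nonneg hγ0 t)]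
    exact mul_le_mul_of_nonneg_left (hkey t f hf ⟨M, hM⟩) (pow_nonneg hγ0 t)
  have hRHSeq : (fun t : ℕ => γ ^ t * (ε * S t)) = fun t => ε * (γ ^ t * S t) := by
    funext t; ring
  have hRHSsumm : Summable fun t : ℕ => γ ^ t * (ε * S t) := by
    rw [hRHSeq]; exact hTsum.mul_left ε
  rw [hrepr K₁ hK₁_meas hK₁_prob, hrepr K₂ hK₂_meas hK₂_prob,
    ← mul_sub, ← Summable.tsum_sub hs₁ hs₂, abs_mul, abs_of_nonneg (le_of_lt h1γ)]
  calc (1 - γ) * |∑' t : ℕ, (γ ^ t * b₁ t - γ ^ t * b₂ t)|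
      ≤ (1 - γ) * ∑' t : ℕ, γ ^ t * (ε * S t) := by
        refine mul_le_mul_of_nonneg_left ?_ (le_of_lt h1γ)
        calc |∑' t : ℕ, (γ ^ t * b₁ t - γ ^ t * b₂ t)|
            ≤ ∑' t : ℕ, |γ ^ t * b₁ t - γ ^ t * b₂ t| := by
              have hns : Summable fun t : ℕ => ‖γ ^ t * b₁ t - γ ^ t * b₂ t‖ := by
                simpa [Real.norm_eq_abs] using (hs₁.sub hs₂).abs
              simpa [Real.norm_eq_abs] using norm_tsum_le_tsum_norm hns
          _ ≤ ∑' t : ℕ, γ ^ t * (ε * S t) :=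
              Summable.tsum_le_tsum habs (hs₁.sub hs₂).abs hRHSsumm
    _ = (1 - γ) * (ε * (γ / ((1 - γ) * (1 - γ * β)))) := by
        rw [hRHSeq, tsum_mul_left, hT]
    _ = γ * ε / (1 - γ * β) := by
        field_simp
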